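/- Fix k ≥ 2 and 0 ≤ a ≤ k-1. The generating function Σ_n D^{k,a}_{n,0} t^n for generalized k-Dyck paths of depth a and semiheight 0 equals C_k(t)^{a+1}, where C_k(t) is the unique formal power series with constant term 1 satisfying C_k(t) = 1 + t·C_k(t)^k. In particular, D^{k,a}_{n,0} = ((a+1)/(kn+a+1))·C(kn+a+1, n). -/

import Mathlib

open Finset PowerSeries

/-- The set of generalized `k`-Dyck paths of depth `a`, semilength `n` and semiheight `m`:
lattice paths from `(0,0)` to `(k*n, k*m)` using steps `U = (1,1)` and `D_{k-1} = (1,1-k)`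
that stay weakly above the line `y = -a`, encoded as lists of vertical displacements. -/
def DyckSet (k a n m : ℕ) : Set (List ℤ) :=
  {L | L.length = k * n ∧ L.sum = (k : ℤ) * m ∧
    (∀ s ∈ L, s = 1 ∨ s = 1 - (k : ℤ)) ∧
    ∀ i, -(a : ℤ) ≤ (L.take i).sum}

/-- `D k a n m` is the number of generalized `k`-Dyck paths of depth `a`,
semilength `n` and semiheight `m`. -/
noncomputable def D (k a n m : ℕ) : ℕ := Nat.card (DyckSet k a n m)

def q (k : ℕ) : ℕ → ℕ → ℕ
  | _, 0 => 1
  | 0, _+1 => 0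
  | m+1, n+1 => q k m (n+1) + q k (m+k) n
termination_by m n => (n, m)

def QSet (k m n : ℕ) : Set (List ℤ) :=
  {L | L.length = m + k * n ∧ L.sum = -(m : ℤ) ∧
    (∀ s ∈ L, s = -1 ∨ s = (k : ℤ) - 1) ∧
    ∀ i < L.length, -(m : ℤ) < (L.take i).sum}

lemma sum_ge_neg_length (L : List ℤ) (h : ∀ s ∈ L, (-1 : ℤ) ≤ s) :
    -(L.length : ℤ) ≤ L.sum := by
  induction L with
  | nil => simp
  | cons s T ih =>
    have h1 := h s (by simp)
    have h2 : -(T.length : ℤ) ≤ T.sum := ih fun x hx => h x (by simp [hx])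
    simp only [List.length_cons, List.sum_cons]
    push_cast
    linarith

lemma eq_replicate_of (k : ℕ) (hk : 2 ≤ k) (L : List ℤ) (m : ℕ)
    (hl : L.length = m) (hs : L.sum = -(m : ℤ))
    (he : ∀ s ∈ L, s = -1 ∨ s = (k : ℤ) - 1) : L = List.replicate m (-1) := by
  induction L generalizing m with
  | nil => simp at hl; subst hl; simp
  | cons s T ih =>
    obtain ⟨m', rfl⟩ : ∃ m', m = m' + 1 := ⟨m - 1, by simp at hl; omega⟩
    have hk' : (2:ℤ) ≤ k := by exact_mod_cast hk
    have hTbd : -(T.length : ℤ) ≤ T.sum :=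
      sum_ge_neg_length T (fun x hx => by rcases he x (by simp [hx]) with h | h <;> omega)
    have hle : T.length = m' := by simp at hl; omega
    have hs' : s + T.sum = -(m' : ℤ) - 1 := by simp at hs; push_cast at hs; linarith
    rcases he s (by simp) with rfl | rfl
    · have hT : T.sum = -(m' : ℤ) := by linarith
      rw [ih m' hle hT (fun x hx => he x (by simp [hx]))]
      simp [List.replicate_succ]
    · exfalso
      rw [hle] at hTbd
      linarith

lemma QSet_zero (k m : ℕ) (hk : 2 ≤ k) : QSet k m 0 = {List.replicate m (-1)} := by
  ext L
  simp only [QSet, Set.mem_setOf_eq, Set.mem_singleton_iff]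
  constructor
  · rintro ⟨hl, hs, he, -⟩
    exact eq_replicate_of k hk L m (by simpa using hl) hs he
  · rintro rfl
    refine ⟨by simp, by simp, fun s hs => Or.inl (List.eq_of_mem_replicate hs), fun i hi => ?_⟩
    rw [List.take_replicate, List.sum_replicate]
    simp only [List.length_replicate] at hi
    rw [nsmul_eq_mul]
    push_cast
    omega

lemma QSet_zero_succ (k n : ℕ) (hk : 2 ≤ k) : QSet k 0 (n+1) = ∅ := by
  ext L
  simp only [QSet, Set.mem_setOf_eq, Set.mem_empty_iff_false, iff_false]
  rintro ⟨hl, -, -, hp⟩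
  have hpos : 0 < L.length := by
    rw [hl]; have : 0 < k := by omega
    exact Nat.add_pos_right _ (Nat.mul_pos this n.succ_pos)
  have := hp 0 hpos
  simp at this
lemma QSet_succ_succ (k m n : ℕ) (hk : 2 ≤ k) :
    QSet k (m+1) (n+1) =
      (List.cons (-1) '' QSet k m (n+1)) ∪ (List.cons ((k:ℤ)-1) '' QSet k (m+k) n) := by
  have hmul : k * (n+1) = k * n + k := by ring
  ext L
  constructor
  · rintro ⟨hl, hs, he, hp⟩
    obtain ⟨s, T, rfl⟩ : ∃ s T, L = s :: T := by
      cases L with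
      | nil => simp at hl; omega
      | cons s T => exact ⟨s, T, rfl⟩
    simp only [List.length_cons, List.sum_cons] at hl hs
    push_cast at hs
    have hp' : ∀ i < T.length, -((m:ℤ)+1) < s + (T.take i).sum := by
      intro i hi
      have := hp (i+1) (by simpa using Nat.succ_lt_succ hi)
      simpa using this
    have hel : ∀ x ∈ T, x = -1 ∨ x = (k:ℤ) - 1 := fun x hx => he x (by simp [hx])
    rcases he s (by simp) with rfl | rfl
    · left
      refine ⟨T, ⟨by omega, by linarith, hel, fun i hi => ?_⟩, rfl⟩
      have := hp' i hi
      linarith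
    · right
      refine ⟨T, ⟨by omega, by push_cast; linarith, hel, fun i hi => ?_⟩, rfl⟩
      have := hp' i hi
      push_cast
      linarith
  · rintro (⟨T, ⟨hl, hs, he, hp⟩, rfl⟩ | ⟨T, ⟨hl, hs, he, hp⟩, rfl⟩) <;>
      [skip; push_cast at hs] <;>
    · refine ⟨by simp [hl]; omega, by simp only [List.sum_cons, hs]; push_cast; ring, ?_, ?_⟩
      · intro x hx
        rcases List.mem_cons.1 hx with rfl | hx
        · simp
        · exact he x hx
      · intro i hi
        cases i with
        | zero =>
          simp only [List.take_zero, List.sum_nil]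
          have : (0:ℤ) ≤ m := Nat.cast_nonneg m
          push_cast
          linarith
        | succ j =>
          have hj : j < T.length := by simp at hi; omega
          have := hp j hj
          simp only [List.take_succ_cons, List.sum_cons]
          push_cast at this ⊢
          linarith
lemma QSet_card (k : ℕ) (hk : 2 ≤ k) :
    ∀ n m, (QSet k m n).Finite ∧ (QSet k m n).ncard = q k m n := by
  intro n
  induction n with
  | zero =>
    intro m
    rw [QSet_zero k m hk]
    exact ⟨Set.finite_singleton _, by simp [q]⟩
  | succ n ihn =>
    intro m
    induction m with
    | zero =>
      rw [QSet_zero_succ k n hk]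
      exact ⟨Set.finite_empty, by simp [q]⟩
    | succ m ihm =>
      obtain ⟨hf1, hc1⟩ := ihm
      obtain ⟨hf2, hc2⟩ := ihn (m + k)
      rw [QSet_succ_succ k m n hk]
      have hinj1 : Function.Injective (List.cons (-1 : ℤ)) := fun a b h => by
        simpa using h
      have hinj2 : Function.Injective (List.cons ((k:ℤ) - 1)) := fun a b h => by
        simpa using h
      have hne : (-1 : ℤ) ≠ (k:ℤ) - 1 := by
        have : (2:ℤ) ≤ k := by exact_mod_cast hk
        omega
      have hdisj : Disjoint (List.cons (-1 : ℤ) '' QSet k m (n+1))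
          (List.cons ((k:ℤ)-1) '' QSet k (m+k) n) := by
        rw [Set.disjoint_left]
        rintro x ⟨T, -, rfl⟩ ⟨S, -, hS⟩
        exact hne (by injection hS with h; omega)
      refine ⟨(hf1.image _).union (hf2.image _), ?_⟩
      rw [Set.ncard_union_eq hdisj (hf1.image _) (hf2.image _),
        Set.ncard_image_of_injective _ hinj1, Set.ncard_image_of_injective _ hinj2,
        hc1, hc2, q]
lemma coeff_Ck (k : ℕ) (Ck : PowerSeries ℚ)
    (h1 : PowerSeries.constantCoeff Ck = 1)
    (h2 : Ck = 1 + PowerSeries.X * Ck ^ k) :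
    ∀ n m, (PowerSeries.coeff n) (Ck ^ m) = q k m n := by
  intro n
  induction n with
  | zero =>
    intro m
    simp [q, coeff_zero_eq_constantCoeff, map_pow, h1]
  | succ n ihn =>
    intro m
    induction m with
    | zero => simp [q, coeff_one]
    | succ m ihm =>
      have key : Ck ^ (m+1) = Ck ^ m + X * Ck ^ (m + k) := by
        calc Ck ^ (m+1) = Ck ^ m * Ck := by ring
        _ = Ck ^ m * (1 + X * Ck ^ k) := by rw [← h2]
        _ = Ck ^ m + X * Ck ^ (m + k) := by ring
      rw [key, map_add, coeff_succ_X_mul, ihm, ihn (m+k), q]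
      push_cast
      ring
lemma key_id (M n m k : ℕ) (hM : M = k * n + m + k) (hk : 1 ≤ k) :
    ((m:ℚ)+1)/((M:ℚ)+1) * (((M+1).choose (n+1) : ℕ) : ℚ) =
      (m:ℚ)/M * (M.choose (n+1)) + ((m:ℚ)+k)/M * (M.choose n) := by
  have hM0 : (M:ℚ) ≠ 0 := by
    have : M ≠ 0 := by omega
    exact_mod_cast this
  have hM1 : (M:ℚ) + 1 ≠ 0 := by positivity
  have hA : ((M:ℚ)+1) * (M.choose n) = ((n:ℚ)+1) * ((M+1).choose (n+1)) := by
    have := Nat.add_one_mul_choose_eq M n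
    have := congrArg (Nat.cast (R := ℚ)) this
    push_cast at this
    linarith
  have hB : (((M+1).choose (n+1) : ℕ) : ℚ) = M.choose n + M.choose (n+1) := by
    have := Nat.choose_succ_succ' M n
    exact_mod_cast congrArg (Nat.cast (R := ℚ)) this
  have hMc : (M:ℚ) = k * n + m + k := by exact_mod_cast congrArg (Nat.cast (R := ℚ)) hM
  field_simp
  linear_combination (((M+1).choose (n+1) : ℕ) : ℚ) * hMc - (k:ℚ) * hA + (m:ℚ) * ((M:ℚ)+1) * hB

lemma q_formula (k : ℕ) (hk : 2 ≤ k) :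
    ∀ n m, 1 ≤ m + n →
      (q k m n : ℚ) = (m:ℚ)/((k*n+m : ℕ) : ℚ) * (((k*n+m).choose n : ℕ) : ℚ) := by
  intro n
  induction n with
  | zero =>
    intro m hm
    have hm0 : ((m:ℚ)) ≠ 0 := by
      have : m ≠ 0 := by omega
      exact_mod_cast this
    simp [q, hm0]
  | succ n ihn =>
    intro m _
    induction m with
    | zero => simp [q]
    | succ m ihm =>
      have e1 : k*(n+1) + m = k*n+m+k := by ring
      have e2 : k*(n+1) + (m+1) = (k*n+m+k) + 1 := by ring
      have e3 : k*n + (m+k) = k*n+m+k := by ring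
      have h1 : (q k m (n+1) : ℚ)
          = (m:ℚ)/((k*n+m+k : ℕ) : ℚ) * (((k*n+m+k).choose (n+1) : ℕ) : ℚ) := by
        rw [ihm (by omega), e1]
      have h2 : (q k (m+k) n : ℚ)
          = ((m:ℚ)+k)/((k*n+m+k : ℕ) : ℚ) * (((k*n+m+k).choose n : ℕ) : ℚ) := by
        rw [ihn (m+k) (by omega), e3]
        push_cast
        ring
      have key := key_id (k*n+m+k) n m k rfl (by omega)
      have hq : (q k (m+1) (n+1) : ℚ) = (q k m (n+1) : ℚ) + (q k (m+k) n : ℚ) := by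
        rw [q]; push_cast; ring
      rw [hq, h1, h2, e2]
      push_cast at key ⊢
      linarith
lemma sum_map_neg (l : List ℤ) : (l.map (fun x => -x)).sum = -l.sum := by
  induction l with
  | nil => simp
  | cons s t ih => simp [ih]; ring

/-- take of the reversed-negated list -/
lemma M1 (L : List ℤ) (i : ℕ) (hi : i ≤ L.length) :
    ((L.reverse.map (fun x => -x)).take i).sum = (L.take (L.length - i)).sum - L.sum := by
  rw [← List.map_take, sum_map_neg]
  have h1 : L.reverse.take i = (L.drop (L.length - i)).reverse := by
    rw [List.reverse_drop]
    congr 1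
    omega
  rw [h1, List.sum_reverse]
  have := List.sum_take_add_sum_drop L (L.length - i)
  linarith

noncomputable def Phi (a : ℕ) (L : List ℤ) : List ℤ :=
  (L.reverse.map (fun x => -x)) ++ List.replicate (a+1) (-1)

lemma Phi_injective (a : ℕ) : Function.Injective (Phi a) := by
  intro L1 L2 h
  have h2 := List.append_cancel_right h
  have := congrArg (fun l => (List.map (fun x : ℤ => -x) l).reverse) h2
  simpa [List.map_map, Function.comp_def] using this

lemma image_DyckSet (k a n : ℕ) (hk : 2 ≤ k) (ha : a ≤ k - 1) :
    Phi a '' DyckSet k a n 0 = QSet k (a+1) n := by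
  ext M
  constructor
  · rintro ⟨L, ⟨hl, hs, he, hp⟩, rfl⟩
    norm_num at hs
    refine ⟨?_, ?_, ?_, ?_⟩
    · simp only [Phi, List.length_append, List.length_map, List.length_reverse, hl,
        List.length_replicate]
      omega
    · simp [Phi, sum_map_neg, List.sum_reverse, hs, List.sum_replicate]
    · intro x hx
      simp only [Phi, List.mem_append, List.mem_map, List.mem_reverse] at hx
      rcases hx with ⟨y, hy, rfl⟩ | hx
      · rcases he y hy with rfl | rfl
        · left; rfl
        · right; push_cast; ring
      · left; exact List.eq_of_mem_replicate hx
    · intro i hi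
      have hlen : (L.reverse.map (fun x : ℤ => -x)).length = k * n := by simp [hl]
      rw [Phi, List.take_append, List.sum_append, hlen]
      rcases le_or_gt i (k*n) with hik | hik
      · have : i - k*n = 0 := by omega
        rw [this]
        have := M1 L i (by omega)
        rw [hl] at this
        rw [this, hs]
        have := hp (k*n - i)
        simp only [List.take_zero, List.sum_nil, add_zero]
        push_cast
        linarith
      · have hfull : (L.reverse.map (fun x : ℤ => -x)).take i = L.reverse.map (fun x => -x) := by
          apply List.take_of_length_le; omega
        rw [hfull, sum_map_neg, List.sum_reverse, hs, List.take_replicate, List.sum_replicate]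
        have hile : i - k*n ≤ a := by
          simp only [Phi, List.length_append, List.length_map, List.length_reverse, hl,
            List.length_replicate] at hi
          omega
        have : min (i - k*n) (a+1) = i - k*n := by omega
        rw [this, nsmul_eq_mul]
        push_cast
        omega
  · rintro ⟨hl, hs, he, hp⟩
    have hlen : M.length = a + 1 + k * n := hl
    -- step 1: the last a+1 entries are all -1
    have key : ∀ j, j ≤ a + 1 →
        (M.take (M.length - j)).sum = -((a:ℤ)+1) + j ∧
        M.drop (M.length - j) = List.replicate j (-1) := by
      intro j hj
      induction j with
      | zero =>
        constructor
        · rw [List.take_of_length_le (by omega)]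
          push_cast at hs ⊢
          simpa using hs
        · simp
      | succ j ih =>
        obtain ⟨ih1, ih2⟩ := ih (by omega)
        have hp1 : M.length - j = (M.length - (j+1)) + 1 := by omega
        set p := M.length - (j+1) with hpdef
        have hplt : p < M.length := by omega
        have htk : M.take (p+1) = M.take p ++ [M[p]] := by
          rw [List.take_succ]; simp [List.getElem?_eq_getElem hplt]
        rw [hp1, htk, List.sum_append, List.sum_cons, List.sum_nil] at ih1
        have hx := he M[p] (List.getElem_mem hplt)
        have hptk := hp p hplt
        have hk2 : (2:ℤ) ≤ k := by exact_mod_cast hk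
        have hja : (j:ℤ) ≤ a := by exact_mod_cast Nat.lt_succ_iff.mp (by omega : j < a+1)
        have hak : (a:ℤ) ≤ (k:ℤ) - 1 := by
          have : a ≤ k - 1 := ha
          have h2 : (a:ℤ) ≤ ((k-1 : ℕ) : ℤ) := by exact_mod_cast this
          have h3 : ((k-1:ℕ):ℤ) = (k:ℤ) - 1 := by push_cast [Nat.cast_sub (by omega : 1 ≤ k)]; ring
          omega
        have hxval : M[p] = -1 := by
          rcases hx with h | h
          · exact h
          · exfalso
            push_cast at ih1 hptk
            rw [h] at ih1
            linarith
        constructor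
        · rw [hxval] at ih1
          push_cast at ih1 ⊢
          linarith
        · rw [List.drop_eq_getElem_cons hplt, hxval, ← hp1, ih2]
          rfl
    obtain ⟨hPsum, hSrep⟩ := key (a+1) (le_refl _)
    have hmlen : M.length - (a+1) = k * n := by omega
    rw [hmlen] at hPsum hSrep
    set P := M.take (k*n) with hPdef
    refine ⟨P.reverse.map (fun x => -x), ⟨?_, ?_, ?_, ?_⟩, ?_⟩
    · simp [hPdef]; omega
    · rw [sum_map_neg, List.sum_reverse, hPsum]
      push_cast
      ring
    · intro x hx
      simp only [List.mem_map, List.mem_reverse] at hx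
      obtain ⟨y, hy, rfl⟩ := hx
      have hyM : y ∈ M := List.mem_of_mem_take hy
      rcases he y hyM with rfl | rfl
      · left; norm_num
      · right; push_cast; ring
    · intro i
      have hPlen : P.length = k * n := by simp [hPdef]; omega
      rcases le_or_gt i (k*n) with hik | hik
      · have := M1 P i (by omega)
        rw [hPlen] at this
        rw [this, hPsum]
        have htt : P.take (k*n - i) = M.take (k*n - i) := by
          rw [hPdef, List.take_take]
          congr 1
          omega
        rw [htt]
        have := hp (k*n - i) (by omega)
        push_cast at this ⊢
        linarith
      · rw [List.take_of_length_le (by simp [hPlen]; omega)]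
        rw [sum_map_neg, List.sum_reverse, hPsum]
        push_cast
        linarith [Nat.cast_nonneg (α := ℤ) a]
    · rw [Phi]
      have : ((P.reverse.map (fun x : ℤ => -x)).reverse.map (fun x : ℤ => -x)) = P := by
        rw [← List.map_reverse, List.reverse_reverse, List.map_map]
        simp [Function.comp_def]
      rw [this, ← hSrep, hPdef, List.take_append_drop]

/-- The generating function of depth-`a` generalized `k`-Dyck paths of semiheight `0`
is `C_k(t)^(a+1)`, and `D_{n,0}^{k,a} = ((a+1)/(kn+a+1))·C(kn+a+1,n)`. -/
theorem dyck_gf (k a : ℕ) (hk : 2 ≤ k) (ha : a ≤ k - 1) (Ck : PowerSeries ℚ)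
    (h1 : PowerSeries.constantCoeff Ck = 1)
    (h2 : Ck = 1 + PowerSeries.X * Ck ^ k) :
    PowerSeries.mk (fun n => (D k a n 0 : ℚ)) = Ck ^ (a + 1) ∧
    ∀ n : ℕ, (D k a n 0 : ℚ) =
      ((a + 1 : ℚ) / (k * n + a + 1)) * ((k * n + a + 1).choose n : ℚ) := by
  have hD : ∀ n, D k a n 0 = q k (a+1) n := by
    intro n
    have h3 : D k a n 0 = (DyckSet k a n 0).ncard := Nat.card_coe_set_eq _
    rw [h3, ← Set.ncard_image_of_injective (DyckSet k a n 0) (Phi_injective a),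
      image_DyckSet k a n hk ha, (QSet_card k hk n (a+1)).2]
  constructor
  · ext n
    rw [PowerSeries.coeff_mk, hD n, coeff_Ck k Ck h1 h2 n (a+1)]
  · intro n
    rw [hD n, q_formula k hk n (a+1) (by omega)]
    have e : k*n + (a+1) = k*n+a+1 := by omega
    rw [e]
    push_cast
    ring
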